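/- arXiv:math/0405434 — 2 statements merged into one kernel-verified Lean document; each statement's English description precedes it below -/
import Mathlib

section
/- For compositions β₁, β₂, …, βₖ, the length of their composition satisfies l(β₁∘β₂∘⋯∘βₖ) = l(β₁) + Σ_{i=2}^{k} (∏_{j=1}^{i−1} |β_j|) · (l(βᵢ) − 1). -/
/-- The size `|β|` of a composition, i.e. the sum of its components. -/
def size (l : List ℕ+) : ℕ := (l.map fun x => (x : ℕ)).sum

/-- Near concatenation `α ⊙ β` of two (nonempty) compositions. -/
def odot (a b : List ℕ+) : List ℕ+ :=
  if a = [] then b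
  else if b = [] then a
  else a.dropLast ++ (a.getLastI + b.headI) :: b.tail

/-- `β^{⊙ m}`, the `m`-fold near concatenation of `β` with itself. -/
def odotPow (b : List ℕ+) : ℕ → List ℕ+
  | 0 => []
  | n + 1 => odot (odotPow b n) b

/-- The composition operation `α ∘ β = β^{⊙α₁} · β^{⊙α₂} ⋯ β^{⊙αₖ}`. -/
def compOp (a b : List ℕ+) : List ℕ+ := (a.map fun ai => odotPow b (ai : ℕ)).flatten

/-- `β₁ ∘ β₂ ∘ ⋯ ∘ βₖ` (the composition `1` is a two-sided identity for `∘`). -/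
def compFold (l : List (List ℕ+)) : List ℕ+ := l.foldr compOp [1]

/-- The list of all coarsenings of a composition. -/
def coarsenings : List ℕ+ → List (List ℕ+)
  | [] => [[]]
  | [a] => [[a]]
  | a :: b :: t => ((coarsenings (b :: t)).map (a :: ·)) ++ coarsenings ((a + b) :: t)
  termination_by l => l.length

/-- The multiset `M(β)` of partitions (as multisets of parts) of all coarsenings of `β`. -/
def Mset (b : List ℕ+) : Multiset (Multiset ℕ+) :=
  ↑((coarsenings b).map fun l => (l : Multiset ℕ+))

lemma odot_length (a b : List ℕ+) (ha : a ≠ []) (hb : b ≠ []) :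
    (odot a b).length = a.length + b.length - 1 := by
  have h1 : 1 ≤ a.length := List.length_pos_iff.mpr ha
  have h2 : 1 ≤ b.length := List.length_pos_iff.mpr hb
  unfold odot
  rw [if_neg ha, if_neg hb]
  simp [List.length_dropLast, List.length_tail]
  omega

lemma odot_ne_nil (a b : List ℕ+) (hb : b ≠ []) : odot a b ≠ [] := by
  unfold odot
  split <;> simp_all

lemma odotPow_ne_nil (b : List ℕ+) (hb : b ≠ []) (n : ℕ) (hn : n ≠ 0) : odotPow b n ≠ [] := by
  cases n with
  | zero => simp at hn
  | succ m => exact odot_ne_nil _ _ hb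

lemma odotPow_length (b : List ℕ+) (hb : b ≠ []) (n : ℕ) :
    (odotPow b (n+1)).length = (n+1) * (b.length - 1) + 1 := by
  have h2 : 1 ≤ b.length := List.length_pos_iff.mpr hb
  induction n with
  | zero => simp [odotPow, odot]; omega
  | succ m ih =>
    have hne := odotPow_ne_nil b hb (m+1) (by omega)
    rw [show odotPow b (m+1+1) = odot (odotPow b (m+1)) b from rfl,
        odot_length _ _ hne hb, ih]
    rw [show (m+1+1) * (b.length - 1) = (m+1) * (b.length - 1) + (b.length - 1) from by ring]
    set k := (m+1) * (b.length - 1)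
    omega

lemma compOp_length (a b : List ℕ+) (hb : b ≠ []) :
    (compOp a b).length = size a * (b.length - 1) + a.length := by
  induction a with
  | nil => simp [compOp, size]
  | cons x t ih =>
    obtain ⟨m, hm⟩ : ∃ m, (x : ℕ) = m + 1 := ⟨(x : ℕ) - 1, by have := x.pos; omega⟩
    have hsplit : compOp (x :: t) b = odotPow b (x : ℕ) ++ compOp t b := rfl
    have hsz : size (x :: t) = (m + 1) + size t := by simp [size, hm]
    rw [hsplit, List.length_append, ih, hm, odotPow_length b hb, hsz, List.length_cons]
    ring

lemma compOp_ne_nil (a b : List ℕ+) (ha : a ≠ []) (hb : b ≠ []) : compOp a b ≠ [] := by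
  have h := compOp_length a b hb
  have h1 : 1 ≤ a.length := List.length_pos_iff.mpr ha
  intro hc
  rw [hc] at h
  simp at h
  omega

lemma compFold_ne_nil (bs : List (List ℕ+)) (hb : ∀ b ∈ bs, b ≠ []) : compFold bs ≠ [] := by
  induction bs with
  | nil => simp [compFold]
  | cons x t ih =>
    exact compOp_ne_nil x (compFold t) (hb x (.head _)) (ih fun b h => hb b (.tail _ h))

lemma compFold_length_aux (bs : List (List ℕ+)) (hb : ∀ b ∈ bs, b ≠ []) (hne : bs ≠ []) :
    (compFold bs).length =
      bs.headI.length + ∑ i ∈ Finset.range (bs.length - 1),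
        (∏ j ∈ Finset.range (i+1), size (bs.getD j [])) * ((bs.getD (i+1) []).length - 1) := by
  induction bs with
  | nil => exact absurd rfl hne
  | cons b t ih =>
    cases t with
    | nil =>
      have h : compFold [b] = compOp b [1] := rfl
      rw [h, compOp_length b [1] (by simp)]
      simp
    | cons c t' =>
      have ht : ∀ x ∈ c :: t', x ≠ [] := fun x h => hb x (.tail _ h)
      have hR := ih ht (by simp)
      have hstep : compFold (b :: c :: t') = compOp b (compFold (c :: t')) := rfl
      have hc1 : 1 ≤ c.length := List.length_pos_iff.mpr (hb c (by simp))
      rw [hstep, compOp_length b _ (compFold_ne_nil _ ht), hR]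
      simp only [List.length_cons, Nat.add_sub_cancel, List.headI_cons]
      rw [Finset.sum_range_succ']
      have hterm : ∀ i ∈ Finset.range t'.length,
          (∏ j ∈ Finset.range (i+1+1), size ((b :: c :: t').getD j [])) *
              (((b :: c :: t').getD (i+1+1) []).length - 1)
          = size b * ((∏ j ∈ Finset.range (i+1), size ((c :: t').getD j [])) *
              (((c :: t').getD (i+1) []).length - 1)) := by
        intro i _
        rw [Finset.prod_range_succ']
        simp only [List.getD_cons_succ, List.getD_cons_zero]
        ring
      rw [Finset.sum_congr rfl hterm, ← Finset.mul_sum]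
      simp only [List.getD_cons_succ, List.getD_cons_zero, Nat.zero_add,
        Finset.prod_range_one]
      set S := ∑ x ∈ Finset.range t'.length,
        (∏ j ∈ Finset.range (x+1), size ((c :: t').getD j [])) *
          ((t'.getD x []).length - 1) with hS
      have hsub : c.length + S - 1 = (c.length - 1) + S := by omega
      rw [hsub, Nat.mul_add]
      ring


/-- `l(β₁∘β₂∘⋯∘βₖ) = l(β₁) + Σ_{i=2}^{k} (∏_{j=1}^{i−1} |β_j|)·(l(βᵢ) − 1)`
(indices written 0-based: the sum runs over `1 ≤ i < k` and the product over `0 ≤ j < i`). -/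
theorem length_compFold (bs : List (List ℕ+)) (hne : bs ≠ []) (hb : ∀ b ∈ bs, b ≠ []) :
    (compFold bs).length =
      (bs.headI).length +
        ∑ i ∈ Finset.Ico 1 bs.length,
          (∏ j ∈ Finset.range i, size (bs.getD j [])) * ((bs.getD i []).length - 1) := by
  rw [compFold_length_aux bs hb hne, Finset.sum_Ico_eq_sum_range]
  congr 1
  exact Finset.sum_congr rfl (fun i _ => by rw [Nat.add_comm 1 i])
end

section
/- For any composition β, one has β* ∼ β (i.e., M(β*) = M(β)); and for any compositions γ₁, …, γₖ, one has γ₁∘γ₂∘⋯∘γₖ ∼ γ₁*∘γ₂*∘⋯∘γₖ*. -/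
lemma odot_nil_right (a : List ℕ+) : odot a [] = a := by
  unfold odot; split <;> simp_all

lemma odot_nil_left (b : List ℕ+) : odot [] b = b := by simp [odot]

lemma odot_eq (as : List ℕ+) (x y : ℕ+) (bs : List ℕ+) :
    odot (as ++ [x]) (y :: bs) = as ++ (x + y) :: bs := by
  unfold odot
  simp [List.getLastI_eq_getLast?]

lemma odot_assoc (a b c : List ℕ+) : odot (odot a b) c = odot a (odot b c) := by
  rcases eq_or_ne a [] with rfl | ha
  · simp [odot_nil_left]
  rcases eq_or_ne b [] with rfl | hb
  · simp [odot_nil_left, odot_nil_right]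
  rcases eq_or_ne c [] with rfl | hc
  · simp [odot_nil_right]
  obtain ⟨as, x, rfl⟩ : ∃ as x, a = as ++ [x] := by
    rcases List.eq_nil_or_concat a with h | ⟨as, x, h⟩
    · tauto
    · exact ⟨as, x, by simp [h]⟩
  obtain ⟨w, cs, rfl⟩ : ∃ w cs, c = w :: cs := by
    cases c with | nil => tauto | cons w cs => exact ⟨w, cs, rfl⟩
  rcases List.eq_nil_or_concat b.tail with hbt | ⟨bs₀, z, hbt⟩
  all_goals try simp only [List.concat_eq_append] at *
  · obtain ⟨y, rfl⟩ : ∃ y, b = [y] := by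
      cases b with
      | nil => tauto
      | cons y t => exact ⟨y, by simp_all⟩
    have h1 : odot (as ++ [x]) [y] = as ++ [x + y] := by
      simpa using odot_eq as x y []
    have h2 : odot [y] (w :: cs) = (y + w) :: cs := by
      simpa using odot_eq [] y w cs
    rw [h1, h2, odot_eq, odot_eq, add_assoc]
  · obtain ⟨y, t, rfl⟩ : ∃ y t, b = y :: t := by
      cases b with | nil => tauto | cons y t => exact ⟨y, t, rfl⟩
    simp only [List.tail_cons] at hbt
    subst hbt
    have h1 : odot (as ++ [x]) (y :: (bs₀ ++ [z])) = (as ++ (x + y) :: bs₀) ++ [z] := by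
      rw [odot_eq]; simp
    have h2 : odot (y :: (bs₀ ++ [z])) (w :: cs) = y :: (bs₀ ++ (z + w) :: cs) := by
      rw [show y :: (bs₀ ++ [z]) = (y :: bs₀) ++ [z] by simp, odot_eq]; simp
    rw [h1, h2, odot_eq, odot_eq]
    simp

lemma odot_reverse (a b : List ℕ+) : (odot a b).reverse = odot b.reverse a.reverse := by
  rcases eq_or_ne a [] with rfl | ha
  · simp [odot_nil_left, odot_nil_right]
  rcases eq_or_ne b [] with rfl | hb
  · simp [odot_nil_left, odot_nil_right]
  obtain ⟨as, x, rfl⟩ : ∃ as x, a = as ++ [x] := by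
    rcases List.eq_nil_or_concat a with h | ⟨as, x, h⟩
    · tauto
    · exact ⟨as, x, by simp [h]⟩
  obtain ⟨y, bs, rfl⟩ : ∃ y bs, b = y :: bs := by
    cases b with | nil => tauto | cons y bs => exact ⟨y, bs, rfl⟩
  rw [odot_eq]
  have : (y :: bs).reverse = bs.reverse ++ [y] := by simp
  rw [this]
  have : (as ++ [x]).reverse = x :: as.reverse := by simp
  rw [this, odot_eq, add_comm]
  simp

lemma odot_pow_comm (b : List ℕ+) (n : ℕ) :
    odot b (odotPow b n) = odot (odotPow b n) b := by
  induction n with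
  | zero => simp [odotPow, odot_nil_left, odot_nil_right]
  | succ n ih =>
    rw [show odotPow b (n + 1) = odot (odotPow b n) b from rfl, ← odot_assoc, ih]

lemma odotPow_reverse (b : List ℕ+) (n : ℕ) :
    (odotPow b n).reverse = odotPow b.reverse n := by
  induction n with
  | zero => rfl
  | succ n ih =>
    show (odot (odotPow b n) b).reverse = odot (odotPow b.reverse n) b.reverse
    rw [odot_reverse, ih, odot_pow_comm]

lemma compOp_append (u v b : List ℕ+) :
    compOp (u ++ v) b = compOp u b ++ compOp v b := by
  simp [compOp]

lemma compOp_reverse (a b : List ℕ+) :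
    (compOp a b).reverse = compOp a.reverse b.reverse := by
  induction a with
  | nil => rfl
  | cons ai a' ih =>
    rw [show (ai :: a').reverse = a'.reverse ++ [ai] by simp, compOp_append,
      show compOp (ai :: a') b = odotPow b ai ++ compOp a' b by simp [compOp],
      List.reverse_append, ih, odotPow_reverse]
    simp [compOp]

lemma compFold_reverse (gs : List (List ℕ+)) :
    compFold (gs.map List.reverse) = (compFold gs).reverse := by
  induction gs with
  | nil => rfl
  | cons g gs ih =>
    show compOp g.reverse (compFold (gs.map List.reverse)) = _
    rw [ih, ← compOp_reverse]
    rfl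

-- basic coercion / unfolding helpers
lemma coe_append {α : Type*} (l₁ l₂ : List α) :
    ((l₁ ++ l₂ : List α) : Multiset α) = ↑l₁ + ↑l₂ := rfl

lemma coarsenings_cons_cons (u v : ℕ+) (s : List ℕ+) :
    coarsenings (u :: v :: s) =
      ((coarsenings (v :: s)).map (u :: ·)) ++ coarsenings ((u + v) :: s) := by
  rw [coarsenings]

lemma coarsenings_single (u : ℕ+) : coarsenings [u] = [[u]] := by rw [coarsenings]

-- snoc recursion for coarsenings, multiset level
lemma coarsenings_snoc : ∀ (n : ℕ) (t : List ℕ+), t.length ≤ n → ∀ (b a : ℕ+),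
    (↑(coarsenings (t ++ [b, a])) : Multiset (List ℕ+)) =
      ↑((coarsenings (t ++ [b])).map (· ++ [a])) + ↑(coarsenings (t ++ [b + a])) := by
  intro n
  induction n with
  | zero =>
    intro t ht b a
    rw [List.length_eq_zero_iff.mp (Nat.le_zero.mp ht)]
    simp only [List.nil_append, coarsenings_cons_cons, coarsenings_single, coe_append]
    rfl
  | succ n ih =>
    intro t ht b a
    match t with
    | [] =>
      simp only [List.nil_append, coarsenings_cons_cons, coarsenings_single, coe_append]
      rfl
    | [c] =>
      simp only [List.cons_append, List.nil_append, coarsenings_cons_cons,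
        coarsenings_single, coe_append, List.map_append, List.map_map, List.map_cons,
        List.map_nil, Multiset.map_coe]
      refine Multiset.coe_eq_coe.mpr ?_
      simp only [Function.comp_def, List.cons_append, List.nil_append]
      refine List.Perm.cons _ ?_
      have := List.Perm.swap ([c + b, a]) ([c, b + a]) ([[c + b + a]])
      simpa [add_assoc] using this
    | c :: d :: t'' =>
      simp only [List.cons_append] at ht ⊢
      have i1 := ih (d :: t'') (by simpa using ht) b a
      have i2 := ih ((c + d) :: t'') (by simpa using ht) b a
      simp only [List.cons_append] at i1 i2
      rw [coarsenings_cons_cons c d, coarsenings_cons_cons c d, coarsenings_cons_cons c d]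
      simp only [coe_append, List.map_append, ← Multiset.map_coe]
      rw [i1, i2]
      simp only [← Multiset.map_coe, Multiset.map_add, Multiset.map_map, Function.comp_def,
        List.cons_append]
      abel

lemma coarsenings_reverse : ∀ (n : ℕ) (l : List ℕ+), l.length ≤ n →
    (↑(coarsenings l.reverse) : Multiset (List ℕ+)) =
      Multiset.map List.reverse ↑(coarsenings l) := by
  intro n
  induction n with
  | zero =>
    intro l hl
    rw [List.length_eq_zero_iff.mp (Nat.le_zero.mp hl)]
    simp [coarsenings]
  | succ n ih =>
    intro l hl
    match l with
    | [] => simp [coarsenings]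
    | [a] => simp [coarsenings]
    | a :: b :: t =>
      have hrev : (a :: b :: t).reverse = t.reverse ++ [b, a] := by simp
      rw [hrev, coarsenings_snoc t.reverse.length t.reverse le_rfl b a]
      have h1 : t.reverse ++ [b] = (b :: t).reverse := by simp
      have h2 : t.reverse ++ [b + a] = ((a + b) :: t).reverse := by simp [add_comm]
      rw [h1, h2]
      simp only [List.length_cons] at hl
      have ih1 := ih (b :: t) (by simpa using hl)
      have ih2 := ih ((a + b) :: t) (by simpa using hl)
      rw [← Multiset.map_coe, ih1, ih2, coarsenings_cons_cons a b, coe_append,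
        ← Multiset.map_coe (a :: ·) (coarsenings (b :: t)), Multiset.map_add,
        Multiset.map_map, Multiset.map_map]
      congr 1
      apply Multiset.map_congr rfl
      intro x _
      simp

lemma flatten_map_singleton {α β : Type*} (f : α → β) (xs : List α) :
    (xs.map fun a => [f a]).flatten = xs.map f := by
  induction xs with
  | nil => rfl
  | cons x xs ih => simp [ih]

lemma Mset_eq (b : List ℕ+) :
    Mset b = ↑((coarsenings b).map fun l : List ℕ+ => (l : Multiset ℕ+)) := by
  unfold Mset
  refine congrArg Multiset.ofList ?_
  simp only [List.map_id', bind_pure_comp, List.map_eq_map]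

lemma Mset_reverse (l : List ℕ+) : Mset l.reverse = Mset l := by
  rw [Mset_eq, Mset_eq]
  have h := coarsenings_reverse l.length l le_rfl
  rw [Multiset.map_coe] at h
  have hp := Multiset.coe_eq_coe.mp h
  refine Multiset.coe_eq_coe.mpr ?_
  refine (hp.map (fun l : List ℕ+ => (l : Multiset ℕ+))).trans ?_
  simp only [List.map_map, Function.comp_def, Multiset.coe_reverse]
  exact List.Perm.refl _

/-- For any composition `β`, `β* ∼ β` (i.e. `M(β*) = M(β)`); and for
any compositions `γ₁, …, γₖ`, `γ₁∘⋯∘γₖ ∼ γ₁*∘⋯∘γₖ*`. -/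
theorem reverse_equiv :
    (∀ β : List ℕ+, β ≠ [] → Mset β.reverse = Mset β) ∧
    (∀ gs : List (List ℕ+), gs ≠ [] → (∀ g ∈ gs, g ≠ []) →
      Mset (compFold gs) = Mset (compFold (gs.map List.reverse))) := by
  refine ⟨fun β _ => Mset_reverse β, fun gs _ _ => ?_⟩
  rw [compFold_reverse, Mset_reverse]
end
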